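/- Let M = [γ(1/p − 1)] for 0 < p ≤ 1, and L > γ + κ(M+1) where κ ≥ 1 satisfies |A_s y| ≤ C s^κ |y| for s ≥ 1. Then for all y ∈ B(0,1) and x with ρ(x) ≥ 2: ∫_0^∞ (t^{-γ} |A_{t^{-1}} y|^{M+1} (1+ρ(x)/t)^{-L})² dt/t ≤ C ρ(x)^{-2(γ+M+1)}. -/

import Mathlib

open MeasureTheory Real Set Matrix
open scoped FourierTransform ENNReal NNReal RealInnerProductSpace

noncomputable section

abbrev Euc (n : ℕ) := EuclideanSpace ℝ (Fin n)

variable {n : ℕ}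

/-- Action of a matrix on Euclidean space. -/
def mulVecEuc (P : Matrix (Fin n) (Fin n) ℝ) (x : Euc n) : Euc n :=
  (EuclideanSpace.equiv (Fin n) ℝ).symm (P.mulVec (EuclideanSpace.equiv (Fin n) ℝ x))

/-- The parabolic dilation `A_t = exp((log t) P)` acting on `ℝⁿ`. -/
def Aact (P : Matrix (Fin n) (Fin n) ℝ) (t : ℝ) (x : Euc n) : Euc n :=
  mulVecEuc (NormedSpace.exp ((Real.log t) • P)) x

/-- The hypothesis `⟨Px, x⟩ ≥ ⟨x, x⟩`. -/
def GoodMatrix (P : Matrix (Fin n) (Fin n) ℝ) : Prop :=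
  ∀ x : Euc n, ⟪x, x⟫ ≤ ⟪mulVecEuc P x, x⟫

/-- `ρ` is the norm function associated with the dilations `A_t`:
`ρ 0 = 0` and for `x ≠ 0`, `ρ x` is positive with `|A_{(ρ x)⁻¹} x| = 1`. -/
def IsRho (P : Matrix (Fin n) (Fin n) ℝ) (ρ : Euc n → ℝ) : Prop :=
  ρ 0 = 0 ∧ ∀ x : Euc n, x ≠ 0 → 0 < ρ x ∧ ‖Aact P (ρ x)⁻¹ x‖ = 1

/-- Non-isotropic dilate `φ_t(x) = t^{-γ} φ(A_t^{-1} x)`, `γ = trace P`. -/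
def dil (P : Matrix (Fin n) (Fin n) ℝ) (φ : Euc n → ℂ) (t : ℝ) (x : Euc n) : ℂ :=
  (t ^ (-(P.trace)) : ℝ) • φ (Aact P t⁻¹ x)

/-- Convolution. -/
def conv (f g : Euc n → ℂ) (x : Euc n) : ℂ := ∫ y, f y * g (x - y)

/-- Peetre maximal function relative to `ρ`. -/
def peetre {E : Type*} [NormedAddCommGroup E] (ρ : Euc n → ℝ) (N R : ℝ)
    (F : Euc n → E) (x : Euc n) : ℝ≥0∞ :=
  ⨆ y : Euc n, (‖F (x - y)‖₊ : ℝ≥0∞) / ENNReal.ofReal ((1 + R * ρ y) ^ N)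

/-- Hardy–Littlewood maximal operator relative to the `ρ`-balls. -/
def maxρ {E : Type*} [NormedAddCommGroup E] (ρ : Euc n → ℝ) (f : Euc n → E)
    (x : Euc n) : ℝ≥0∞ :=
  ⨆ (c : Euc n) (r : ℝ) (_ : 0 < r) (_ : ρ (x - c) < r),
    (volume {y : Euc n | ρ (c - y) < r})⁻¹ * ∫⁻ y in {y : Euc n | ρ (c - y) < r}, ‖f y‖₊

/-- Muckenhoupt `A_p` class relative to `ρ`-balls. -/
def IsAp (ρ : Euc n → ℝ) (w : Euc n → ℝ) (p : ℝ) : Prop :=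
  ∃ C : ℝ≥0, ∀ (c : Euc n) (r : ℝ), 0 < r →
    (∫⁻ y in {y : Euc n | ρ (c - y) < r}, ENNReal.ofReal (w y)) *
      (∫⁻ y in {y : Euc n | ρ (c - y) < r}, ENNReal.ofReal (w y ^ (-(1 / (p - 1)))))
        ^ (p - 1)
      ≤ C * (volume {y : Euc n | ρ (c - y) < r}) ^ p


set_option maxHeartbeats 1000000


lemma mulVecEuc_mul (A B : Matrix (Fin n) (Fin n) ℝ) (x : Euc n) :
    mulVecEuc (A * B) x = mulVecEuc A (mulVecEuc B x) := by
  simp [mulVecEuc, Matrix.mulVec_mulVec, show ∀ v : Euc n, EuclideanSpace.equiv (Fin n) ℝ v = v.ofLp from fun _ => rfl]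

lemma mulVecEuc_one (x : Euc n) : mulVecEuc (1 : Matrix (Fin n) (Fin n) ℝ) x = x := by
  simp [mulVecEuc]

lemma hasDerivAt_expAct (P : Matrix (Fin n) (Fin n) ℝ) (x : Euc n) (s : ℝ) :
    HasDerivAt (fun s : ℝ => mulVecEuc (NormedSpace.exp (s • P)) x)
      (mulVecEuc P (mulVecEuc (NormedSpace.exp (s • P)) x)) s := by
  letI : SeminormedRing (Matrix (Fin n) (Fin n) ℝ) := Matrix.linftyOpSemiNormedRing
  letI : NormedRing (Matrix (Fin n) (Fin n) ℝ) := Matrix.linftyOpNormedRing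
  letI : NormedAlgebra ℝ (Matrix (Fin n) (Fin n) ℝ) := Matrix.linftyOpNormedAlgebra
  have hexp : HasDerivAt (fun s : ℝ => NormedSpace.exp (s • P))
      (NormedSpace.exp (s • P) * P) s := hasDerivAt_exp_smul_const P s
  let L : Matrix (Fin n) (Fin n) ℝ →ₗ[ℝ] Euc n :=
    { toFun := fun A => mulVecEuc A x
      map_add' := by intro A B; simp [mulVecEuc, Matrix.add_mulVec]
      map_smul' := by intro c A; simp [mulVecEuc, Matrix.smul_mulVec] }
  have := (L.toContinuousLinearMap.hasFDerivAt.comp_hasDerivAt s hexp)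
  refine this.congr_deriv ?_
  symm
  show mulVecEuc P (mulVecEuc (NormedSpace.exp (s • P)) x) = L (NormedSpace.exp (s • P) * P)
  rw [show NormedSpace.exp (s • P) * P = P * NormedSpace.exp (s • P) from
    (((Commute.refl P).smul_left s).exp_left).eq]
  exact (mulVecEuc_mul _ _ _).symm

lemma norm_Aact_le {P : Matrix (Fin n) (Fin n) ℝ} (hP : GoodMatrix P) (x : Euc n) {t : ℝ}
    (ht0 : 0 < t) (ht1 : t ≤ 1) : ‖Aact P t x‖ ≤ t * ‖x‖ := by
  set v : ℝ → Euc n := fun s => mulVecEuc (NormedSpace.exp (s • P)) x with hvdef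
  have hv : ∀ s, HasDerivAt v (mulVecEuc P (v s)) s := fun s => hasDerivAt_expAct P x s
  set g : ℝ → ℝ := fun s => Real.exp (-2 * s) * ⟪v s, v s⟫ with hgdef
  have hg : ∀ s, HasDerivAt g
      (Real.exp (-2 * s) * (-2) * ⟪v s, v s⟫ +
        Real.exp (-2 * s) * (⟪v s, mulVecEuc P (v s)⟫ + ⟪mulVecEuc P (v s), v s⟫)) s := by
    intro s
    have h1 : HasDerivAt (fun s : ℝ => Real.exp (-2 * s)) (Real.exp (-2 * s) * (-2)) s := by
      simpa using ((hasDerivAt_id s).const_mul (-2 : ℝ)).exp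
    exact h1.mul (HasDerivAt.inner ℝ (hv s) (hv s))
  have hmono : Monotone g := by
    apply monotone_of_deriv_nonneg
    · exact fun s => (hg s).differentiableAt
    · intro s
      rw [(hg s).deriv]
      have h2 : ⟪v s, v s⟫ ≤ ⟪mulVecEuc P (v s), v s⟫ := hP (v s)
      have h3 : ⟪v s, mulVecEuc P (v s)⟫ = ⟪mulVecEuc P (v s), v s⟫ := real_inner_comm _ _
      nlinarith [Real.exp_pos (-2 * s), real_inner_self_nonneg (x := v s)]
  have hkey : g (Real.log t) ≤ g 0 := hmono (Real.log_nonpos ht0.le ht1)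
  have hv0 : v 0 = x := by
    simp [hvdef, NormedSpace.exp_zero, mulVecEuc_one]
  have hvt : v (Real.log t) = Aact P t x := rfl
  simp only [hgdef] at hkey
  rw [hvt, hv0] at hkey
  simp only [mul_zero, Real.exp_zero, one_mul] at hkey
  have hexplog : Real.exp (-2 * Real.log t) = (t ^ 2)⁻¹ := by
    rw [show -2 * Real.log t = Real.log ((t ^ 2)⁻¹) by
      rw [Real.log_inv, Real.log_pow]; push_cast; ring]
    exact Real.exp_log (by positivity)
  rw [hexplog, real_inner_self_eq_norm_sq, real_inner_self_eq_norm_sq] at hkey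
  have h4 : ‖Aact P t x‖ ^ 2 ≤ (t * ‖x‖) ^ 2 := by
    rw [inv_mul_le_iff₀ (by positivity)] at hkey
    calc ‖Aact P t x‖ ^ 2 ≤ t ^ 2 * ‖x‖ ^ 2 := hkey
    _ = (t * ‖x‖) ^ 2 := by ring
  calc ‖Aact P t x‖ = √(‖Aact P t x‖ ^ 2) := (Real.sqrt_sq (norm_nonneg _)).symm
  _ ≤ √((t * ‖x‖) ^ 2) := Real.sqrt_le_sqrt h4
  _ = t * ‖x‖ := Real.sqrt_sq (by positivity)

lemma Aact_Aact {P : Matrix (Fin n) (Fin n) ℝ} {a b : ℝ} (ha : 0 < a) (hb : 0 < b) (x : Euc n) :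
    Aact P a (Aact P b x) = Aact P (a * b) x := by
  unfold Aact
  rw [← mulVecEuc_mul]
  have h : NormedSpace.exp (Real.log (a * b) • P) =
      NormedSpace.exp (Real.log a • P) * NormedSpace.exp (Real.log b • P) := by
    rw [Real.log_mul ha.ne' hb.ne', add_smul]
    exact Matrix.exp_add_of_commute _ _ (((Commute.refl P).smul_left _).smul_right _)
  rw [h]

lemma Aact_one {P : Matrix (Fin n) (Fin n) ℝ} (x : Euc n) : Aact P 1 x = x := by
  unfold Aact
  simp [NormedSpace.exp_zero, mulVecEuc_one]

lemma norm_le_rho {P : Matrix (Fin n) (Fin n) ℝ} (hP : GoodMatrix P) {ρ : Euc n → ℝ}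
    (hρ : IsRho P ρ) {y : Euc n} (hy : ρ y ≤ 1) : ‖y‖ ≤ ρ y := by
  rcases eq_or_ne y 0 with rfl | hy0
  · simp [hρ.1]
  · obtain ⟨hpos, hnorm⟩ := hρ.2 y hy0
    have h1 : Aact P (ρ y) (Aact P (ρ y)⁻¹ y) = y := by
      rw [Aact_Aact hpos (inv_pos.mpr hpos), mul_inv_cancel₀ hpos.ne', Aact_one]
    calc ‖y‖ = ‖Aact P (ρ y) (Aact P (ρ y)⁻¹ y)‖ := by rw [h1]
    _ ≤ ρ y * ‖Aact P (ρ y)⁻¹ y‖ := norm_Aact_le hP _ hpos hy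
    _ = ρ y := by rw [hnorm, mul_one]

lemma goodMatrix_trace_nonneg {P : Matrix (Fin n) (Fin n) ℝ} (hP : GoodMatrix P) : 0 ≤ P.trace := by
  have h : ∀ i : Fin n, (1:ℝ) ≤ P i i := by
    intro i
    have := hP (EuclideanSpace.single i (1:ℝ))
    simpa [mulVecEuc, EuclideanSpace.inner_single_right, EuclideanSpace.single_apply,
      Matrix.mulVec_single, real_inner_self_eq_norm_sq, show ∀ v : Euc n, EuclideanSpace.equiv (Fin n) ℝ v = v.ofLp from fun _ => rfl, EuclideanSpace.norm_single] using this
  have : (0:ℝ) ≤ ∑ i, P i i := Finset.sum_nonneg fun i _ => le_trans zero_le_one (h i)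
  simpa [Matrix.trace, Matrix.diag] using this


lemma sq_div_le {u c t e : ℝ} (ht : 0 < t) (hu : 0 ≤ u) (h : u ≤ c * t ^ e) :
    u ^ 2 / t ≤ c ^ 2 * t ^ (2 * e - 1) := by
  have hte : (0:ℝ) < t ^ e := Real.rpow_pos_of_pos ht e
  have hc : 0 ≤ c := by nlinarith
  have h2 : u ^ 2 ≤ (c * t ^ e) ^ 2 := by nlinarith
  have hp2 : (c * t ^ e) ^ 2 = c ^ 2 * t ^ (2 * e) := by
    rw [mul_pow, ← Real.rpow_natCast (t ^ e) 2, ← Real.rpow_mul ht.le]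
    norm_num [mul_comm e 2]
  have hsplit : t ^ (2 * e) = t ^ (2 * e - 1) * t := by
    rw [← Real.rpow_add_one ht.ne' (2 * e - 1)]
    ring_nf
  rw [div_le_iff₀ ht]
  calc u ^ 2 ≤ (c * t ^ e) ^ 2 := h2
  _ = c ^ 2 * t ^ (2 * e - 1) * t := by rw [hp2, hsplit]; ring

-- piece bound
lemma piece_bound {c e : ℝ} {s : Set ℝ} (hs : MeasurableSet s) (hpos : s ⊆ Ioi 0)
    (hc : 0 ≤ c) (F : ℝ → ℝ≥0∞) (hF : ∀ t ∈ s, F t ≤ ENNReal.ofReal (c * t ^ e))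
    (hint : IntegrableOn (fun t => c * t ^ e) s volume) :
    ∫⁻ t in s, F t ≤ ENNReal.ofReal (∫ t in s, c * t ^ e) := by
  refine (setLIntegral_mono' hs hF).trans (le_of_eq ?_)
  refine (ofReal_integral_eq_lintegral_ofReal hint ?_).symm
  refine (ae_restrict_iff' hs).mpr (ae_of_all _ fun t ht => ?_)
  exact mul_nonneg hc (Real.rpow_nonneg (le_of_lt (hpos ht)) e)

theorem statement14 (n : ℕ) (P : Matrix (Fin n) (Fin n) ℝ) (hP : GoodMatrix P)
    (ρ : Euc n → ℝ) (hρ : IsRho P ρ) (p : ℝ) (hp : 0 < p) (hp1 : p ≤ 1)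
    (M : ℤ) (hM : M = ⌊P.trace * (1 / p - 1)⌋)
    (κ C₀ : ℝ) (hκ : 1 ≤ κ) (hC₀ : 0 < C₀)
    (hκbound : ∀ s : ℝ, 1 ≤ s → ∀ y : Euc n, ‖Aact P s y‖ ≤ C₀ * s ^ κ * ‖y‖)
    (L : ℝ) (hL : P.trace + κ * ((M : ℝ) + 1) < L) :
    ∃ C : ℝ≥0, ∀ x y : Euc n, ρ y < 1 → 2 ≤ ρ x →
      ∫⁻ t in Set.Ioi (0 : ℝ),
          ENNReal.ofReal ((t ^ (-P.trace) * ‖Aact P t⁻¹ y‖ ^ ((M : ℝ) + 1)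
            * (1 + ρ x / t) ^ (-L)) ^ 2) / ENNReal.ofReal t
        ≤ C * ENNReal.ofReal (ρ x ^ (-(2 * (P.trace + (M : ℝ) + 1)))) := by
  have hγ0 : 0 ≤ P.trace := goodMatrix_trace_nonneg hP
  set γ := P.trace with hγdef
  have hM0 : 0 ≤ (M : ℝ) := by
    have h1p : (1:ℝ) ≤ 1 / p := by
      rw [le_div_iff₀ hp]; linarith
    have h2 : 0 ≤ γ * (1 / p - 1) := by nlinarith
    have h3 : (0:ℤ) ≤ M := by rw [hM]; exact Int.floor_nonneg.mpr h2
    exact_mod_cast h3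
  set m1 : ℝ := (M : ℝ) + 1 with hm1def
  have hm1 : 1 ≤ m1 := by simp only [hm1def]; linarith
  set a : ℝ := γ + m1 with hadef
  set b : ℝ := γ + κ * m1 with hbdef
  have hab : a ≤ b := by simp only [hadef, hbdef]; nlinarith
  have hLb : b < L := hL
  have hLa : a < L := lt_of_le_of_lt hab hLb
  have ha1 : 1 ≤ a := by simp only [hadef]; linarith
  have hL0 : 0 ≤ L := by linarith
  have hd1 : 0 < 2 * (L - b) := by linarith
  have hd2 : 0 < 2 * (L - a) := by linarith
  have hd3 : 0 < 2 * a := by linarith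
  set c1 : ℝ := C₀ ^ m1 with hc1def
  have hc1 : 0 < c1 := Real.rpow_pos_of_pos hC₀ m1
  set Ctot : ℝ := c1 ^ 2 * (1 / (2 * (L - b))) + (1 / (2 * (L - a)) + 1 / (2 * a))
    with hCdef
  have hCtot0 : 0 ≤ Ctot := by positivity
  refine ⟨Ctot.toNNReal, ?_⟩
  intro x y hy hx
  set R := ρ x with hRdef
  have hR0 : (0:ℝ) < R := by linarith
  have hR1 : (1:ℝ) ≤ R := by linarith
  have hynorm : ‖y‖ ≤ 1 := le_trans (norm_le_rho hP hρ hy.le) hy.le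
  -- pointwise bounds
  have hu_nn : ∀ t : ℝ, 0 < t →
      0 ≤ t ^ (-γ) * ‖Aact P t⁻¹ y‖ ^ m1 * (1 + R / t) ^ (-L) := by
    intro t ht
    have h1 : (0:ℝ) < 1 + R / t := by positivity
    positivity
  have hD : ∀ t : ℝ, 0 < t → (1 + R / t) ^ (-L) ≤ R ^ (-L) * t ^ L := by
    intro t ht
    have h1 : (1 + R / t) ^ (-L) ≤ (R / t) ^ (-L) :=
      Real.rpow_le_rpow_of_nonpos (div_pos hR0 ht) (le_add_of_nonneg_left zero_le_one)
        (neg_nonpos.mpr hL0)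
    have h2 : (R / t) ^ (-L) = R ^ (-L) * t ^ L := by
      rw [Real.div_rpow hR0.le ht.le, Real.rpow_neg ht.le L, div_eq_mul_inv, inv_inv,
        Real.rpow_neg hR0.le L]
    linarith
  have hu1 : ∀ t : ℝ, 0 < t → t ≤ 1 →
      t ^ (-γ) * ‖Aact P t⁻¹ y‖ ^ m1 * (1 + R / t) ^ (-L)
        ≤ (c1 * R ^ (-L)) * t ^ (L - b) := by
    intro t ht0 ht1
    have hNt : ‖Aact P t⁻¹ y‖ ≤ C₀ * t ^ (-κ) := by
      have h1t : 1 ≤ t⁻¹ := (one_le_inv₀ ht0).mpr ht1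
      have h2 : (t⁻¹) ^ κ = t ^ (-κ) := by
        rw [Real.inv_rpow ht0.le, ← Real.rpow_neg ht0.le]
      calc ‖Aact P t⁻¹ y‖ ≤ C₀ * t⁻¹ ^ κ * ‖y‖ := hκbound t⁻¹ h1t y
      _ ≤ C₀ * t⁻¹ ^ κ * 1 := by
          apply mul_le_mul_of_nonneg_left hynorm (by positivity)
      _ = C₀ * t ^ (-κ) := by rw [mul_one, h2]
    have hNm : ‖Aact P t⁻¹ y‖ ^ m1 ≤ c1 * t ^ (-(κ * m1)) := by
      calc ‖Aact P t⁻¹ y‖ ^ m1 ≤ (C₀ * t ^ (-κ)) ^ m1 :=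
        Real.rpow_le_rpow (norm_nonneg _) hNt (by linarith)
      _ = c1 * t ^ (-(κ * m1)) := by
        rw [Real.mul_rpow hC₀.le (Real.rpow_nonneg ht0.le _),
          ← Real.rpow_mul ht0.le, hc1def]
        ring_nf
    calc t ^ (-γ) * ‖Aact P t⁻¹ y‖ ^ m1 * (1 + R / t) ^ (-L)
        ≤ t ^ (-γ) * (c1 * t ^ (-(κ * m1))) * (R ^ (-L) * t ^ L) := by
          apply mul_le_mul
          · exact mul_le_mul le_rfl hNm (Real.rpow_nonneg (norm_nonneg _) _)
              (Real.rpow_nonneg ht0.le _)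
          · exact hD t ht0
          · positivity
          · positivity
    _ = (c1 * R ^ (-L)) * t ^ (L - b) := by
        rw [show L - b = -γ + (-(κ * m1) + L) by simp only [hbdef]; ring,
          Real.rpow_add ht0, Real.rpow_add ht0]
        ring
  have hNbig : ∀ t : ℝ, 1 ≤ t → ‖Aact P t⁻¹ y‖ ^ m1 ≤ t ^ (-m1) := by
    intro t ht1
    have ht0 : (0:ℝ) < t := lt_of_lt_of_le zero_lt_one ht1
    have hN : ‖Aact P t⁻¹ y‖ ≤ t ^ (-(1:ℝ)) := by
      calc ‖Aact P t⁻¹ y‖ ≤ t⁻¹ * ‖y‖ :=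
        norm_Aact_le hP y (inv_pos.mpr ht0) (inv_le_one_of_one_le₀ ht1)
      _ ≤ t⁻¹ * 1 := by
          apply mul_le_mul_of_nonneg_left hynorm (by positivity)
      _ = t ^ (-(1:ℝ)) := by rw [mul_one, Real.rpow_neg_one]
    calc ‖Aact P t⁻¹ y‖ ^ m1 ≤ (t ^ (-(1:ℝ))) ^ m1 :=
      Real.rpow_le_rpow (norm_nonneg _) hN (by linarith)
    _ = t ^ (-m1) := by rw [← Real.rpow_mul ht0.le]; ring_nf
  have hu2 : ∀ t : ℝ, 1 ≤ t →
      t ^ (-γ) * ‖Aact P t⁻¹ y‖ ^ m1 * (1 + R / t) ^ (-L)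
        ≤ (R ^ (-L)) * t ^ (L - a) := by
    intro t ht1
    have ht0 : (0:ℝ) < t := lt_of_lt_of_le zero_lt_one ht1
    calc t ^ (-γ) * ‖Aact P t⁻¹ y‖ ^ m1 * (1 + R / t) ^ (-L)
        ≤ t ^ (-γ) * t ^ (-m1) * (R ^ (-L) * t ^ L) := by
          apply mul_le_mul
          · exact mul_le_mul le_rfl (hNbig t ht1) (Real.rpow_nonneg (norm_nonneg _) _)
              (Real.rpow_nonneg ht0.le _)
          · exact hD t ht0
          · positivity
          · positivity
    _ = (R ^ (-L)) * t ^ (L - a) := by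
        rw [show L - a = -γ + (-m1 + L) by simp only [hadef]; ring,
          Real.rpow_add ht0, Real.rpow_add ht0]
        ring
  have hu3 : ∀ t : ℝ, 1 ≤ t →
      t ^ (-γ) * ‖Aact P t⁻¹ y‖ ^ m1 * (1 + R / t) ^ (-L)
        ≤ 1 * t ^ (-a) := by
    intro t ht1
    have ht0 : (0:ℝ) < t := lt_of_lt_of_le zero_lt_one ht1
    have hD3 : (1 + R / t) ^ (-L) ≤ 1 :=
      Real.rpow_le_one_of_one_le_of_nonpos
        (le_add_of_nonneg_right (by positivity)) (neg_nonpos.mpr hL0)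
    calc t ^ (-γ) * ‖Aact P t⁻¹ y‖ ^ m1 * (1 + R / t) ^ (-L)
        ≤ t ^ (-γ) * t ^ (-m1) * 1 := by
          apply mul_le_mul
          · exact mul_le_mul le_rfl (hNbig t ht1) (Real.rpow_nonneg (norm_nonneg _) _)
              (Real.rpow_nonneg ht0.le _)
          · exact hD3
          · positivity
          · positivity
    _ = 1 * t ^ (-a) := by
        rw [show -a = -γ + -m1 by simp only [hadef]; ring, Real.rpow_add ht0]
        ring
  -- split the integral
  have hsplit : Ioi (0:ℝ) = Ioc 0 1 ∪ (Ioc 1 R ∪ Ioi R) := by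
    rw [Ioc_union_Ioi_eq_Ioi hR1, Ioc_union_Ioi_eq_Ioi zero_le_one]
  rw [hsplit]
  refine le_trans (lintegral_union_le _ _ _) ?_
  refine le_trans (add_le_add_right (lintegral_union_le _ _ _) _) ?_
  -- the three pieces
  have hp1 : (∫⁻ t in Ioc (0:ℝ) 1,
      ENNReal.ofReal ((t ^ (-γ) * ‖Aact P t⁻¹ y‖ ^ m1 * (1 + R / t) ^ (-L)) ^ 2)
        / ENNReal.ofReal t)
      ≤ ENNReal.ofReal ((c1 * R ^ (-L)) ^ 2 * (1 / (2 * (L - b)))) := by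
    have he : (-1:ℝ) < 2 * (L - b) - 1 := by linarith
    refine le_trans (piece_bound (c := (c1 * R ^ (-L)) ^ 2) (e := 2 * (L - b) - 1)
      measurableSet_Ioc (fun t ht => ht.1)
      (by positivity) _ ?_ ?_) (ENNReal.ofReal_le_ofReal ?_)
    · intro t ht
      rw [← ENNReal.ofReal_div_of_pos ht.1]
      exact ENNReal.ofReal_le_ofReal (sq_div_le ht.1 (hu_nn t ht.1) (hu1 t ht.1 ht.2))
    · exact ((intervalIntegrable_iff_integrableOn_Ioc_of_le zero_le_one).mp
        (intervalIntegral.intervalIntegrable_rpow' he)).const_mul _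
    · rw [MeasureTheory.integral_const_mul]
      have hval : ∫ t in Ioc (0:ℝ) 1, t ^ (2 * (L - b) - 1) = 1 / (2 * (L - b)) := by
        rw [← intervalIntegral.integral_of_le zero_le_one, integral_rpow (Or.inl he)]
        rw [Real.one_rpow, Real.zero_rpow (by linarith : 2 * (L - b) - 1 + 1 ≠ 0)]
        field_simp
        rw [div_eq_div_iff (by linarith) (by linarith)]; ring
      rw [hval]
  have hp2 : (∫⁻ t in Ioc (1:ℝ) R,
      ENNReal.ofReal ((t ^ (-γ) * ‖Aact P t⁻¹ y‖ ^ m1 * (1 + R / t) ^ (-L)) ^ 2)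
        / ENNReal.ofReal t)
      ≤ ENNReal.ofReal ((R ^ (-L)) ^ 2 * (R ^ (2 * (L - a)) / (2 * (L - a)))) := by
    have he : (-1:ℝ) < 2 * (L - a) - 1 := by linarith
    refine le_trans (piece_bound (c := (R ^ (-L)) ^ 2) (e := 2 * (L - a) - 1)
      measurableSet_Ioc (fun t ht => lt_trans zero_lt_one ht.1)
      (by positivity) _ ?_ ?_) (ENNReal.ofReal_le_ofReal ?_)
    · intro t ht
      have ht0 : (0:ℝ) < t := lt_trans zero_lt_one ht.1
      rw [← ENNReal.ofReal_div_of_pos ht0]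
      exact ENNReal.ofReal_le_ofReal (sq_div_le ht0 (hu_nn t ht0) (hu2 t ht.1.le))
    · exact ((intervalIntegrable_iff_integrableOn_Ioc_of_le hR1).mp
        (intervalIntegral.intervalIntegrable_rpow' he)).const_mul _
    · rw [MeasureTheory.integral_const_mul]
      have hval : ∫ t in Ioc (1:ℝ) R, t ^ (2 * (L - a) - 1)
          = (R ^ (2 * (L - a)) - 1) / (2 * (L - a)) := by
        rw [← intervalIntegral.integral_of_le hR1, integral_rpow (Or.inl he)]
        rw [Real.one_rpow]
        ring_nf
      rw [hval]
      have hRp : (0:ℝ) ≤ R ^ (2 * (L - a)) := Real.rpow_nonneg hR0.le _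
      have : (R ^ (2 * (L - a)) - 1) / (2 * (L - a)) ≤ R ^ (2 * (L - a)) / (2 * (L - a)) :=
        (div_le_div_iff_of_pos_right hd2).mpr (by linarith)
      nlinarith [sq_nonneg (R ^ (-L))]
  have hp3 : (∫⁻ t in Ioi R,
      ENNReal.ofReal ((t ^ (-γ) * ‖Aact P t⁻¹ y‖ ^ m1 * (1 + R / t) ^ (-L)) ^ 2)
        / ENNReal.ofReal t)
      ≤ ENNReal.ofReal ((1:ℝ) ^ 2 * (R ^ (-(2 * a)) / (2 * a))) := by
    have he : 2 * (-a) - 1 < (-1:ℝ) := by linarith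
    refine le_trans (piece_bound (c := (1:ℝ) ^ 2) (e := 2 * (-a) - 1)
      measurableSet_Ioi (fun t ht => lt_trans hR0 ht)
      (by positivity) _ ?_ ?_) (ENNReal.ofReal_le_ofReal ?_)
    · intro t ht
      have ht1 : (1:ℝ) ≤ t := le_of_lt (lt_of_le_of_lt hR1 ht)
      have ht0 : (0:ℝ) < t := lt_of_lt_of_le zero_lt_one ht1
      rw [← ENNReal.ofReal_div_of_pos ht0]
      exact ENNReal.ofReal_le_ofReal (sq_div_le ht0 (hu_nn t ht0) (hu3 t ht1))
    · exact (integrableOn_Ioi_rpow_of_lt he hR0).const_mul _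
    · rw [MeasureTheory.integral_const_mul]
      rw [integral_Ioi_rpow_of_lt he hR0]
      have h30 : -R ^ (2 * (-a) - 1 + 1) / (2 * (-a) - 1 + 1) = R ^ (-(2 * a)) / (2 * a) := by
        rw [show 2 * (-a) - 1 + 1 = -(2 * a) by ring, neg_div_neg_eq]
      rw [h30]
  -- combine
  refine le_trans (add_le_add hp1 (add_le_add hp2 hp3)) ?_
  rw [← ENNReal.ofReal_add (by positivity) (by positivity),
    ← ENNReal.ofReal_add (by positivity) (by positivity)]
  have hfin : (c1 * R ^ (-L)) ^ 2 * (1 / (2 * (L - b)))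
      + ((R ^ (-L)) ^ 2 * (R ^ (2 * (L - a)) / (2 * (L - a)))
        + (1:ℝ) ^ 2 * (R ^ (-(2 * a)) / (2 * a)))
      ≤ Ctot * R ^ (-(2 * a)) := by
    have hRL2 : (R ^ (-L)) ^ 2 = R ^ (-(2 * L)) := by
      rw [← Real.rpow_natCast (R ^ (-L)) 2, ← Real.rpow_mul hR0.le]
      norm_num
      ring_nf
    have hmono : R ^ (-(2 * L)) ≤ R ^ (-(2 * a)) :=
      Real.rpow_le_rpow_of_exponent_le hR1 (by linarith)
    have hV2 : (R ^ (-L)) ^ 2 * (R ^ (2 * (L - a)) / (2 * (L - a)))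
        = (1 / (2 * (L - a))) * R ^ (-(2 * a)) := by
      rw [hRL2, div_eq_mul_one_div, ← mul_assoc, ← Real.rpow_add hR0]
      rw [show -(2 * L) + 2 * (L - a) = -(2 * a) by ring]
      ring
    have hV1 : (c1 * R ^ (-L)) ^ 2 * (1 / (2 * (L - b)))
        ≤ (c1 ^ 2 * (1 / (2 * (L - b)))) * R ^ (-(2 * a)) := by
      rw [mul_pow, hRL2]
      calc c1 ^ 2 * R ^ (-(2 * L)) * (1 / (2 * (L - b)))
          ≤ c1 ^ 2 * R ^ (-(2 * a)) * (1 / (2 * (L - b))) := by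
            apply mul_le_mul_of_nonneg_right
              (mul_le_mul_of_nonneg_left hmono (by positivity)) (by positivity)
      _ = (c1 ^ 2 * (1 / (2 * (L - b)))) * R ^ (-(2 * a)) := by ring
    have h13 : (1:ℝ) ^ 2 * (R ^ (-(2 * a)) / (2 * a)) = (1 / (2 * a)) * R ^ (-(2 * a)) := by
      ring
    rw [hV2, h13]
    calc (c1 * R ^ (-L)) ^ 2 * (1 / (2 * (L - b)))
        + (1 / (2 * (L - a)) * R ^ (-(2 * a)) + 1 / (2 * a) * R ^ (-(2 * a)))
        ≤ (c1 ^ 2 * (1 / (2 * (L - b)))) * R ^ (-(2 * a))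
          + (1 / (2 * (L - a)) * R ^ (-(2 * a)) + 1 / (2 * a) * R ^ (-(2 * a))) :=
          add_le_add_left hV1 _
    _ = Ctot * R ^ (-(2 * a)) := by rw [hCdef]; ring
  refine le_trans (ENNReal.ofReal_le_ofReal hfin) (le_of_eq ?_)
  have hexp : R ^ (-(2 * a)) = R ^ (-(2 * (γ + (M:ℝ) + 1))) := by
    rw [hadef, hm1def]; ring_nf
  rw [ENNReal.ofReal_mul hCtot0, hexp]
  rfl
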